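/- Let n ≥ 2 and 1 ≤ i < j ≤ n. Then Cov[ln(1−U_(i)), ln(U_(j))] = (Γ(n+1)/Γ(i)) · Σ_{k=1}^∞ (Γ(i+k)/(k·Γ(n+1+k))) · (ψ(n+1+k) − ψ(j+k)) − (ψ(n+1−i) − ψ(n+1)) · (ψ(j) − ψ(n+1)), where the series converges, E[ln(1−U_(i)) ln(U_(j))] is the integral of (ln(1−u))(ln v) against the joint density c_{i,j,n} u^{i−1}(v−u)^{j−i−1}(1−v)^{n−j} over {0 < u < v < 1}, and Cov[X,Y] = E[XY] − E[X]E[Y]. -/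

import Mathlib

open MeasureTheory intervalIntegral

/-- The digamma function `ψ`, the derivative of `log Γ` on `(0, ∞)`. -/
noncomputable def digamma (x : ℝ) : ℝ := deriv (fun y => Real.log (Real.Gamma y)) x

lemma gamma_diffAt {x : ℝ} (hx : 0 < x) : DifferentiableAt ℝ Real.Gamma x := by
  apply Real.differentiableAt_Gamma
  intro m h
  have h2 : (0:ℝ) < x := hx
  rw [h] at h2
  have : (0:ℝ) ≤ (m:ℝ) := Nat.cast_nonneg m
  linarith

lemma hasDerivAt_logGamma {x : ℝ} (hx : 0 < x) :
    HasDerivAt (fun y => Real.log (Real.Gamma y)) (digamma x) x := by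
  have h1 : DifferentiableAt ℝ (fun y => Real.log (Real.Gamma y)) x :=
    (gamma_diffAt hx).log (Real.Gamma_pos_of_pos hx).ne'
  exact h1.hasDerivAt

lemma hasDerivAt_Gamma {x : ℝ} (hx : 0 < x) :
    HasDerivAt Real.Gamma (digamma x * Real.Gamma x) x := by
  have h1 := (gamma_diffAt hx).hasDerivAt
  have h2 := h1.log (Real.Gamma_pos_of_pos hx).ne'
  have h3 : digamma x = deriv Real.Gamma x / Real.Gamma x := h2.deriv
  rw [h3, div_mul_cancel₀ _ (Real.Gamma_pos_of_pos hx).ne']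
  exact h1

lemma digamma_add_one {x : ℝ} (hx : 0 < x) : digamma (x + 1) = digamma x + 1 / x := by
  have h1 : HasDerivAt (fun y : ℝ => Real.log (Real.Gamma (y + 1))) (digamma (x + 1)) x := by
    simpa [Function.comp_def] using (hasDerivAt_logGamma (by linarith : (0:ℝ) < x + 1)).comp x
      ((hasDerivAt_id x).add_const 1)
  have h2 : HasDerivAt (fun y : ℝ => Real.log y + Real.log (Real.Gamma y))
      (1 / x + digamma x) x := by
    simpa [one_div, Pi.add_def] using (Real.hasDerivAt_log hx.ne').add (hasDerivAt_logGamma hx)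
  have h3 : (fun y : ℝ => Real.log (Real.Gamma (y + 1)))
      =ᶠ[nhds x] fun y => Real.log y + Real.log (Real.Gamma y) := by
    filter_upwards [eventually_gt_nhds hx] with y hy
    rw [Real.Gamma_add_one hy.ne', Real.log_mul hy.ne' (Real.Gamma_pos_of_pos hy).ne']
  have := h1.unique (h2.congr_of_eventuallyEq h3)
  rw [this]; ring

lemma digamma_add_nat {x : ℝ} (hx : 0 < x) (m : ℕ) :
    digamma (x + m) = digamma x + ∑ l ∈ Finset.range m, 1 / (x + l) := by
  induction m with
  | zero => simp
  | succ m ih =>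
    have hxm : (0:ℝ) < x + m := by positivity
    have hcast : (((m:ℕ) + 1 : ℕ) : ℝ) = (m:ℝ) + 1 := by push_cast; ring
    rw [show x + (((m:ℕ)+1:ℕ):ℝ) = (x + m) + 1 by rw [hcast]; ring, digamma_add_one hxm, ih, Finset.sum_range_succ]
    push_cast; ring

lemma digamma_diff_nonneg' {x : ℝ} (hx : 0 < x) (m : ℕ) : 0 ≤ digamma (x + m) - digamma x := by
  rw [digamma_add_nat hx m]
  have : (0:ℝ) ≤ ∑ l ∈ Finset.range m, 1 / (x + l) := by
    apply Finset.sum_nonneg; intro l _; positivity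
  linarith

lemma digamma_diff_le' {x : ℝ} (hx : 0 < x) (m : ℕ) : digamma (x + m) - digamma x ≤ m / x := by
  rw [digamma_add_nat hx m]
  have : ∑ l ∈ Finset.range m, 1 / (x + l) ≤ ∑ l ∈ Finset.range m, 1 / x := by
    apply Finset.sum_le_sum; intro l _
    apply one_div_le_one_div_of_le hx; simp [hx.le]
  simp only [Finset.sum_const, Finset.card_range, nsmul_eq_mul] at this
  rw [mul_one_div] at this
  linarith

/-- rpow beta integral with nat second exponent. -/
lemma betaR_eq (m : ℕ) {s : ℝ} (hs : 0 < s) :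
    (∫ v in (0:ℝ)..1, v ^ (s - 1) * (1 - v) ^ m)
      = Real.Gamma s * m.factorial / Real.Gamma (s + m + 1) := by
  have key := Complex.Gamma_mul_Gamma_eq_betaIntegral (s := (s:ℂ)) (t := (m:ℂ) + 1)
    (by simpa using hs) (by simp; positivity)
  have hbeta : Complex.betaIntegral (s:ℂ) ((m:ℂ) + 1)
      = ((∫ v in (0:ℝ)..1, v ^ (s - 1) * (1 - v) ^ m : ℝ) : ℂ) := by
    rw [Complex.betaIntegral, ← intervalIntegral.integral_ofReal]
    apply intervalIntegral.integral_congr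
    intro x hx
    rw [Set.uIcc_of_le (by norm_num : (0:ℝ) ≤ 1)] at hx
    have hx0 : 0 ≤ x := hx.1
    have hx1 : x ≤ 1 := hx.2
    simp only [Complex.ofReal_mul, Complex.ofReal_pow, Complex.ofReal_sub, Complex.ofReal_one]
    rw [Complex.ofReal_cpow hx0]
    rw [show ((m:ℂ) + 1 - 1) = (m : ℂ) by ring, Complex.cpow_natCast]
    push_cast
    ring
  rw [hbeta] at key
  have hG : Complex.Gamma ((m:ℂ) + 1) = (m.factorial : ℂ) := by
    exact_mod_cast Complex.Gamma_nat_eq_factorial m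
  rw [hG] at key
  -- convert to real
  have h1 : Complex.Gamma (s:ℂ) = (Real.Gamma s : ℂ) := Complex.Gamma_ofReal s
  have h2 : Complex.Gamma ((s:ℂ) + ((m:ℂ)+1)) = (Real.Gamma (s + m + 1) : ℂ) := by
    rw [show ((s:ℂ) + ((m:ℂ)+1)) = ((s + m + 1 : ℝ) : ℂ) by push_cast; ring]
    exact Complex.Gamma_ofReal _
  rw [h1, h2] at key
  have hGpos : (0:ℝ) < Real.Gamma (s + m + 1) := Real.Gamma_pos_of_pos (by positivity)
  field_simp
  rw [mul_comm] at key ⊢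
  have h3 : Real.Gamma (s + m + 1) * (∫ v in (0:ℝ)..1, v ^ (s - 1) * (1 - v) ^ m) = (m.factorial:ℝ) * Real.Gamma s := by exact_mod_cast key.symm
  linarith [h3]

lemma betaNat (p q : ℕ) :
    (∫ t in (0:ℝ)..1, t ^ p * (1 - t) ^ q)
      = (p.factorial * q.factorial : ℝ) / (p + q + 1).factorial := by
  have h := betaR_eq q (s := (p:ℝ) + 1) (by positivity)
  have h2 : (∫ v in (0:ℝ)..1, v ^ ((p:ℝ) + 1 - 1) * (1 - v) ^ q)
      = ∫ t in (0:ℝ)..1, t ^ p * (1 - t) ^ q := by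
    apply intervalIntegral.integral_congr
    intro x _
    simp only [show (p:ℝ) + 1 - 1 = ((p:ℕ):ℝ) from by push_cast; ring, Real.rpow_natCast]
  rw [h2] at h
  rw [h, Real.Gamma_nat_eq_factorial,
    show (p:ℝ) + 1 + q + 1 = (((p + q + 1 : ℕ)) + 1 : ℝ) by push_cast; ring,
    Real.Gamma_nat_eq_factorial]

lemma betaScaled (p q : ℕ) {v : ℝ} (hv : 0 < v) :
    (∫ u in (0:ℝ)..v, u ^ p * (v - u) ^ q)
      = v ^ (p + q + 1) * (p.factorial * q.factorial : ℝ) / (p + q + 1).factorial := by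
  have h := intervalIntegral.integral_comp_mul_left
    (f := fun u => u ^ p * (v - u) ^ q) (a := (0:ℝ)) (b := 1) (c := v) hv.ne'
  simp only [mul_zero, mul_one] at h
  have h2 : (∫ t in (0:ℝ)..1, (v * t) ^ p * (v - v * t) ^ q)
      = v ^ (p + q) * ∫ t in (0:ℝ)..1, t ^ p * (1 - t) ^ q := by
    rw [← intervalIntegral.integral_const_mul]
    apply intervalIntegral.integral_congr
    intro x _
    simp only [show ∀ y:ℝ, v - v * y = v * (1 - y) from fun y => by ring, mul_pow]
    ring
  rw [h2, betaNat, smul_eq_mul] at h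
  have hI : (∫ u in (0:ℝ)..v, u ^ p * (v - u) ^ q) = v * (v ^ (p + q) *
      ((p.factorial * q.factorial : ℝ) / (p + q + 1).factorial)) := by
    rw [h, ← mul_assoc, mul_inv_cancel₀ hv.ne', one_mul]
  rw [hI, pow_succ]
  ring

lemma neg_log_mul_sqrt_le {v : ℝ} (h0 : 0 < v) (h1 : v ≤ 1) : -Real.log v * v ^ ((1:ℝ)/2) ≤ 2 := by
  set w := v ^ ((1:ℝ)/2) with hw
  have hwpos : 0 < w := Real.rpow_pos_of_pos h0 _
  have hlog : Real.log w = (1/2) * Real.log v := Real.log_rpow h0 _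
  have h2 : Real.log (1/w) ≤ 1/w - 1 := Real.log_le_sub_one_of_pos (by positivity)
  rw [one_div, Real.log_inv] at h2
  have : -Real.log v = -2 * Real.log w := by rw [hlog]; ring
  rw [this]
  have h3 : -Real.log w ≤ 1/w := by
    rw [one_div]; linarith
  calc -2 * Real.log w * w = 2 * (-Real.log w) * w := by ring
    _ ≤ 2 * (1/w) * w := by
        apply mul_le_mul_of_nonneg_right _ hwpos.le
        linarith
    _ = 2 := by field_simp

lemma continuous_rpow_pos {c : ℝ} (hc : 0 ≤ c) : Continuous (fun v : ℝ => v ^ c) := by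
  rw [continuous_iff_continuousAt]
  intro x
  exact Real.continuousAt_rpow_const x c (Or.inr hc)

lemma logBeta (m : ℕ) {q : ℝ} (hq : 2 ≤ q) :
    (∫ v in (0:ℝ)..1, Real.log v * v ^ (q - 1) * (1 - v) ^ m)
      = Real.Gamma q * m.factorial / Real.Gamma (q + m + 1)
          * (digamma q - digamma (q + m + 1)) := by
  have hq0 : (0:ℝ) < q := by linarith
  have hqm0 : (0:ℝ) < q + m + 1 := by positivity
  set g : ℝ → ℝ := fun s => Real.Gamma s * m.factorial / Real.Gamma (s + m + 1) with hgdef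
  -- derivative of g
  have hg : HasDerivAt g
      (g q * (digamma q - digamma (q + m + 1))) q := by
    have h1 : HasDerivAt (fun s : ℝ => Real.Gamma s * (m.factorial:ℝ))
        (digamma q * Real.Gamma q * m.factorial) q := (hasDerivAt_Gamma hq0).mul_const _
    have h2 : HasDerivAt (fun s : ℝ => Real.Gamma (s + m + 1))
        (digamma (q + m + 1) * Real.Gamma (q + m + 1)) q := by
      have := (hasDerivAt_Gamma hqm0).comp q
        (((hasDerivAt_id q).add_const ((m:ℝ))).add_const 1)
      simpa [add_assoc, Function.comp_def] using this
    have hne : Real.Gamma (q + m + 1) ≠ 0 := (Real.Gamma_pos_of_pos hqm0).ne'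
    have := h1.div h2 hne
    refine this.congr_deriv ?_
    rw [hgdef]
    field_simp
  -- derivative of the integral
  have hF := intervalIntegral.hasDerivAt_integral_of_dominated_loc_of_deriv_le
    (F := fun s v => v ^ (s - 1) * (1 - v) ^ m)
    (F' := fun s v => Real.log v * v ^ (s - 1) * (1 - v) ^ m)
    (x₀ := q) (a := (0:ℝ)) (b := 1) (μ := volume) (bound := fun _ => 2)
    (s := Metric.ball q (1/2)) (Metric.ball_mem_nhds q (by norm_num))
    (by
      filter_upwards [eventually_gt_nhds (by linarith : (1:ℝ) < q)] with x hx
      apply Continuous.aestronglyMeasurable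
      show Continuous fun v : ℝ => v ^ (x - 1) * (1 - v) ^ m
      exact (continuous_rpow_pos (by linarith : (0:ℝ) ≤ x - 1)).mul
        ((continuous_const.sub continuous_id).pow m))
    (by
      apply Continuous.intervalIntegrable
      show Continuous fun v : ℝ => v ^ (q - 1) * (1 - v) ^ m
      exact (continuous_rpow_pos (by linarith : (0:ℝ) ≤ q - 1)).mul
        ((continuous_const.sub continuous_id).pow m))
    (by
      apply Measurable.aestronglyMeasurable
      show Measurable fun v : ℝ => Real.log v * v ^ (q - 1) * (1 - v) ^ m
      exact (Real.measurable_log.mul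
        (continuous_rpow_pos (by linarith : (0:ℝ) ≤ q - 1)).measurable).mul
        ((measurable_const.sub measurable_id).pow_const m))
    (by
      filter_upwards with v hv x hx
      rw [Set.uIoc_of_le (by norm_num : (0:ℝ) ≤ 1)] at hv
      obtain ⟨hv0, hv1⟩ := hv
      have hx2 : |x - q| < 1/2 := by
        have := mem_ball_iff_norm.mp hx
        simpa [Real.norm_eq_abs] using this
      have hxq : (1:ℝ)/2 ≤ x - 1 := by
        cases' abs_lt.mp hx2 with h1 h2; linarith
      have hb1 : v ^ (x - 1) ≤ v ^ ((1:ℝ)/2) :=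
        Real.rpow_le_rpow_of_exponent_ge hv0 hv1 hxq
      have hb2 : (1 - v) ^ m ≤ 1 := pow_le_one₀ (by linarith) (by linarith)
      have hb3 : (0:ℝ) ≤ (1 - v) ^ m := pow_nonneg (by linarith) m
      have hb4 : 0 < v ^ (x - 1) := Real.rpow_pos_of_pos hv0 _
      have hlv : |Real.log v| = -Real.log v := by
        rw [abs_of_nonpos (Real.log_nonpos hv0.le hv1)]
      rw [Real.norm_eq_abs, abs_mul, abs_mul, hlv, abs_of_nonneg hb4.le, abs_of_nonneg hb3]
      have hlog0 : 0 ≤ -Real.log v := by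
        have := Real.log_nonpos hv0.le hv1; linarith
      calc -Real.log v * v ^ (x - 1) * (1 - v) ^ m
          ≤ -Real.log v * v ^ ((1:ℝ)/2) * 1 := by
            apply mul_le_mul (mul_le_mul_of_nonneg_left hb1 hlog0) hb2 hb3
            exact mul_nonneg hlog0 (Real.rpow_pos_of_pos hv0 _).le
        _ ≤ 2 := by rw [mul_one]; exact neg_log_mul_sqrt_le hv0 hv1)
    (by apply intervalIntegrable_const)
    (by
      filter_upwards with v hv x _
      rw [Set.uIoc_of_le (by norm_num : (0:ℝ) ≤ 1)] at hv
      have h1 : HasDerivAt (fun y : ℝ => v ^ (y - 1))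
          (v ^ (x - 1) * Real.log v) x := by
        have := (Real.hasStrictDerivAt_const_rpow hv.1 (x - 1)).hasDerivAt
        have h2 := this.comp x ((hasDerivAt_id x).sub_const 1)
        simpa [Function.comp_def] using h2
      have := h1.mul_const ((1 - v) ^ m)
      refine this.congr_deriv ?_
      show _ = Real.log v * v ^ (x - 1) * (1 - v) ^ m
      ring)
  -- identify the two derivatives
  have hev : (fun s : ℝ => ∫ v in (0:ℝ)..1, v ^ (s - 1) * (1 - v) ^ m) =ᶠ[nhds q] g := by
    filter_upwards [eventually_gt_nhds (by linarith : (0:ℝ) < q)] with s hs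
    exact betaR_eq m hs
  have hg' : HasDerivAt (fun s : ℝ => ∫ v in (0:ℝ)..1, v ^ (s - 1) * (1 - v) ^ m)
      (g q * (digamma q - digamma (q + m + 1))) q := hg.congr_of_eventuallyEq hev
  exact hF.2.unique hg'

lemma innerEq (a b : ℕ) {v : ℝ} (hv0 : 0 < v) (hv1 : v < 1) :
    (∫ u in (0:ℝ)..v, Real.log (1 - u) * (u ^ a * (v - u) ^ b))
      = ∑' k : ℕ, (-(1 / ((k:ℝ) + 1)) *
          (((a + k + 1).factorial * b.factorial : ℝ) / (a + b + k + 2).factorial) *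
          v ^ (a + b + k + 2)) := by
  set f : ℕ → ℝ → ℝ := fun k u => -(1 / ((k:ℝ) + 1)) * (u ^ (a + k + 1) * (v - u) ^ b)
    with hfdef
  have hμ : volume.restrict (Set.Ioc (0:ℝ) v) Set.univ ≤ ENNReal.ofReal v := by
    rw [Measure.restrict_apply MeasurableSet.univ, Set.univ_inter, Real.volume_Ioc]
    simp
  -- pointwise norm bound on Ioc 0 v
  have hbound : ∀ k : ℕ, ∀ u ∈ Set.Ioc (0:ℝ) v, ‖f k u‖ ≤ v ^ k := by
    intro k u hu
    obtain ⟨hu0, huv⟩ := hu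
    have hu1 : u ≤ 1 := le_trans huv hv1.le
    have h1 : |u ^ (a + k + 1)| ≤ v ^ k := by
      rw [abs_of_nonneg (by positivity)]
      calc u ^ (a + k + 1) ≤ u ^ k := pow_le_pow_of_le_one hu0.le hu1 (by omega)
        _ ≤ v ^ k := pow_le_pow_left₀ hu0.le huv k
    have h2 : |(v - u) ^ b| ≤ 1 := by
      rw [abs_of_nonneg (pow_nonneg (by linarith) b)]
      exact pow_le_one₀ (by linarith) (by linarith)
    have h3 : |(-(1 / ((k:ℝ) + 1)))| ≤ 1 := by
      rw [abs_neg, abs_of_nonneg (by positivity)]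
      rw [div_le_one (by positivity)]
      linarith [Nat.cast_nonneg (α := ℝ) k]
    calc ‖f k u‖ = |(-(1 / ((k:ℝ) + 1)))| * (|u ^ (a + k + 1)| * |(v - u) ^ b|) := by
          rw [hfdef]; rw [Real.norm_eq_abs, abs_mul, abs_mul]
      _ ≤ 1 * (v ^ k * 1) := by
          apply mul_le_mul h3 _ (by positivity) zero_le_one
          exact mul_le_mul h1 h2 (abs_nonneg _) (by positivity)
      _ = v ^ k := by ring
  have hint : ∀ k : ℕ, Integrable (f k) (volume.restrict (Set.Ioc 0 v)) := by
    intro k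
    apply Continuous.integrableOn_Ioc
    exact continuous_const.mul ((continuous_pow _).mul
      ((continuous_const.sub continuous_id).pow b))
  have hsum : Summable fun k : ℕ => ∫ u in Set.Ioc (0:ℝ) v, ‖f k u‖ := by
    apply Summable.of_nonneg_of_le
      (fun k => integral_nonneg fun u => norm_nonneg _)
      (fun k => ?_) ((summable_geometric_of_lt_one hv0.le hv1).mul_left v)
    calc (∫ u in Set.Ioc (0:ℝ) v, ‖f k u‖)
        ≤ ∫ _ in Set.Ioc (0:ℝ) v, v ^ k := by
          apply integral_mono_ae (hint k).norm (integrable_const _)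
          · filter_upwards [ae_restrict_mem measurableSet_Ioc] with u hu
            exact hbound k u hu
      _ = (volume (Set.Ioc (0:ℝ) v)).toReal * v ^ k := by
          rw [setIntegral_const, smul_eq_mul, measureReal_def]
      _ ≤ v * v ^ k := by
          apply mul_le_mul_of_nonneg_right _ (by positivity)
          rw [Real.volume_Ioc]
          simp [ENNReal.toReal_ofReal hv0.le]
  have hkey := integral_tsum_of_summable_integral_norm hint hsum
  -- identify the pointwise tsum with the integrand
  have hptwise : ∀ u ∈ Set.Ioc (0:ℝ) v,
      (∑' k, f k u) = Real.log (1 - u) * (u ^ a * (v - u) ^ b) := by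
    intro u hu
    obtain ⟨hu0, huv⟩ := hu
    have habs : |u| < 1 := by rw [abs_of_pos hu0]; linarith
    have h := Real.hasSum_pow_div_log_of_abs_lt_one habs
    have h2 := (h.mul_right (u ^ a * (v - u) ^ b)).neg
    have h3 : (fun k : ℕ => -(u ^ (k + 1) / ((k:ℝ) + 1) * (u ^ a * (v - u) ^ b)))
        = fun k => f k u := by
      funext k
      rw [hfdef]
      simp only
      rw [show a + k + 1 = (k + 1) + a by omega, pow_add]
      ring
    rw [h3] at h2
    have := h2.tsum_eq
    rw [this]
    ring
  rw [intervalIntegral.integral_of_le hv0.le]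
  calc (∫ u in Set.Ioc (0:ℝ) v, Real.log (1 - u) * (u ^ a * (v - u) ^ b))
      = ∫ u in Set.Ioc (0:ℝ) v, (∑' k, f k u) := by
        apply setIntegral_congr_fun measurableSet_Ioc
        intro u hu
        exact (hptwise u hu).symm
    _ = ∑' k, ∫ u in Set.Ioc (0:ℝ) v, f k u := hkey.symm
    _ = _ := by
        apply tsum_congr
        intro k
        rw [← intervalIntegral.integral_of_le hv0.le]
        have : (∫ u in (0:ℝ)..v, f k u)
            = -(1 / ((k:ℝ) + 1)) * ∫ u in (0:ℝ)..v, u ^ (a + k + 1) * (v - u) ^ b := by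
          rw [← intervalIntegral.integral_const_mul]
        rw [this, betaScaled _ _ hv0]
        have hc : a + k + 1 + b + 1 = a + b + k + 2 := by omega
        rw [hc]
        push_cast
        ring

lemma abs_log_mul_pow_le {v : ℝ} (h0 : 0 < v) (h1 : v ≤ 1) {e : ℕ} (he : 1 ≤ e) :
    |Real.log v| * v ^ e ≤ 2 := by
  have hlv : |Real.log v| = -Real.log v := abs_of_nonpos (Real.log_nonpos h0.le h1)
  have h2 : v ^ e ≤ v := by
    calc v ^ e ≤ v ^ 1 := pow_le_pow_of_le_one h0.le h1 he
      _ = v := pow_one v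
  have h3 : v ≤ v ^ ((1:ℝ)/2) := by
    calc v = v ^ ((1:ℝ)) := (Real.rpow_one v).symm
      _ ≤ v ^ ((1:ℝ)/2) := Real.rpow_le_rpow_of_exponent_ge h0 h1 (by norm_num)
  have h4 : 0 ≤ -Real.log v := by
    have := Real.log_nonpos h0.le h1; linarith
  rw [hlv]
  calc -Real.log v * v ^ e ≤ -Real.log v * v ^ ((1:ℝ)/2) :=
        mul_le_mul_of_nonneg_left (le_trans h2 h3) h4
    _ ≤ 2 := neg_log_mul_sqrt_le h0 h1

lemma summable_one_div_sq : Summable fun k : ℕ => 1 / ((k:ℝ) + 1) ^ 2 := by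
  have h := (Real.summable_one_div_nat_pow (p := 2)).mpr one_lt_two
  have h2 := (summable_nat_add_iff 1).mpr h
  apply h2.congr
  intro k
  push_cast
  ring

lemma Dk_le (a b k : ℕ) :
    (((a + k + 1).factorial * b.factorial : ℝ) / (a + b + k + 2).factorial)
      ≤ b.factorial / ((k:ℝ) + 1) := by
  have hnat : (k + 1) * (a + k + 1).factorial ≤ (a + b + k + 2).factorial := by
    calc (k + 1) * (a + k + 1).factorial ≤ (a + k + 2) * (a + k + 1).factorial := by
          apply Nat.mul_le_mul_right; omega
      _ = (a + k + 2).factorial := (Nat.factorial_succ (a + k + 1)).symm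
      _ ≤ (a + b + k + 2).factorial := Nat.factorial_le (by omega)
  have hnat' : ((k:ℝ) + 1) * (a + k + 1).factorial ≤ (a + b + k + 2).factorial := by
    exact_mod_cast hnat
  rw [div_le_div_iff₀ (by positivity) (by positivity)]
  calc ((a + k + 1).factorial * b.factorial : ℝ) * ((k:ℝ) + 1)
      = (((k:ℝ) + 1) * (a + k + 1).factorial) * b.factorial := by ring
    _ ≤ ((a + b + k + 2).factorial : ℝ) * b.factorial := by
        apply mul_le_mul_of_nonneg_right hnat' (by positivity)
    _ = (b.factorial : ℝ) * (a + b + k + 2).factorial := by ring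

lemma outerEq (a b c : ℕ) :
    (∫ v in (0:ℝ)..1, Real.log v * (1 - v) ^ c *
        (∫ u in (0:ℝ)..v, Real.log (1 - u) * (u ^ a * (v - u) ^ b)))
    = ∑' k : ℕ, ((1 / ((k:ℝ) + 1)) *
        (((a + k + 1).factorial * b.factorial : ℝ) / (a + b + k + 2).factorial) *
        (Real.Gamma ((a:ℝ) + b + k + 3) * c.factorial /
          Real.Gamma ((a:ℝ) + b + k + 3 + c + 1)) *
        (digamma ((a:ℝ) + b + k + 3 + c + 1) - digamma ((a:ℝ) + b + k + 3))) := by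
  set D : ℕ → ℝ := fun k => -(1 / ((k:ℝ) + 1)) *
      (((a + k + 1).factorial * b.factorial : ℝ) / (a + b + k + 2).factorial) with hD
  set g : ℕ → ℝ → ℝ := fun k v => (Real.log v * (1 - v) ^ c) *
      (D k * v ^ (a + b + k + 2)) with hg
  have hDabs : ∀ k : ℕ, |D k| ≤ b.factorial / ((k:ℝ) + 1) ^ 2 := by
    intro k
    rw [hD]
    simp only
    rw [abs_mul, abs_neg, abs_of_nonneg (by positivity : (0:ℝ) ≤ 1 / ((k:ℝ)+1)),
      abs_of_nonneg (by positivity)]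
    calc 1 / ((k:ℝ) + 1) * ((((a + k + 1).factorial * b.factorial : ℝ)) / (a + b + k + 2).factorial)
        ≤ 1 / ((k:ℝ) + 1) * (b.factorial / ((k:ℝ) + 1)) :=
          mul_le_mul_of_nonneg_left (Dk_le a b k) (by positivity)
      _ = b.factorial / ((k:ℝ) + 1) ^ 2 := by rw [div_mul_div_comm, one_mul, ← sq]
  -- bound on g
  have hgbound : ∀ k : ℕ, ∀ v ∈ Set.Ioo (0:ℝ) 1, ‖g k v‖ ≤ 2 * (b.factorial / ((k:ℝ) + 1) ^ 2) := by
    intro k v hv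
    obtain ⟨hv0, hv1⟩ := hv
    rw [hg]
    simp only
    rw [Real.norm_eq_abs, abs_mul, abs_mul, abs_mul]
    have h1 : |(1 - v) ^ c| ≤ 1 := by
      rw [abs_of_nonneg (pow_nonneg (by linarith) c)]
      exact pow_le_one₀ (by linarith) (by linarith)
    have h2 : |v ^ (a + b + k + 2)| = v ^ (a + b + k + 2) := abs_of_nonneg (by positivity)
    calc |Real.log v| * |(1 - v) ^ c| * (|D k| * |v ^ (a + b + k + 2)|)
        ≤ |Real.log v| * 1 * (|D k| * |v ^ (a + b + k + 2)|) := by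
          apply mul_le_mul_of_nonneg_right (mul_le_mul_of_nonneg_left h1 (abs_nonneg _))
          positivity
      _ = |D k| * (|Real.log v| * v ^ (a + b + k + 2)) := by rw [h2]; ring
      _ ≤ (b.factorial / ((k:ℝ) + 1) ^ 2) * 2 := by
          apply mul_le_mul (hDabs k) (abs_log_mul_pow_le hv0 hv1.le (by omega))
            (by positivity) (by positivity)
      _ = 2 * (b.factorial / ((k:ℝ) + 1) ^ 2) := by ring
  have hgmeas : ∀ k : ℕ, AEStronglyMeasurable (g k) (volume.restrict (Set.Ioo 0 1)) := by
    intro k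
    apply Measurable.aestronglyMeasurable
    exact ((Real.measurable_log.mul ((measurable_const.sub measurable_id).pow_const c)).mul
      (measurable_const.mul (measurable_id.pow_const _)))
  have hgint : ∀ k : ℕ, Integrable (g k) (volume.restrict (Set.Ioo 0 1)) := by
    intro k
    apply Integrable.mono' (integrable_const (2 * ((b.factorial:ℝ) / ((k:ℝ) + 1) ^ 2)))
      (hgmeas k)
    filter_upwards [ae_restrict_mem measurableSet_Ioo] with v hv
    exact hgbound k v hv
  have hgsum : Summable fun k : ℕ => ∫ v in Set.Ioo (0:ℝ) 1, ‖g k v‖ := by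
    apply Summable.of_nonneg_of_le (fun k => integral_nonneg fun v => norm_nonneg _)
      (fun k => ?_)
      (summable_one_div_sq.mul_left (2 * (b.factorial : ℝ)))
    calc (∫ v in Set.Ioo (0:ℝ) 1, ‖g k v‖)
        ≤ ∫ _ in Set.Ioo (0:ℝ) 1, 2 * ((b.factorial:ℝ) / ((k:ℝ) + 1) ^ 2) := by
          apply integral_mono_ae (hgint k).norm (integrable_const _)
          filter_upwards [ae_restrict_mem measurableSet_Ioo] with v hv
          exact hgbound k v hv
      _ = (volume (Set.Ioo (0:ℝ) 1)).toReal * (2 * ((b.factorial:ℝ) / ((k:ℝ) + 1) ^ 2)) := by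
          rw [setIntegral_const, smul_eq_mul, measureReal_def]
      _ ≤ 1 * (2 * ((b.factorial:ℝ) / ((k:ℝ) + 1) ^ 2)) := by
          apply mul_le_mul_of_nonneg_right _ (by positivity)
          rw [Real.volume_Ioo]
          simp
      _ = 2 * (b.factorial:ℝ) * (1 / ((k:ℝ) + 1) ^ 2) := by ring
  have hkey := integral_tsum_of_summable_integral_norm hgint hgsum
  -- LHS as integral over Ioo of the tsum
  have hlhs : (∫ v in (0:ℝ)..1, Real.log v * (1 - v) ^ c *
      (∫ u in (0:ℝ)..v, Real.log (1 - u) * (u ^ a * (v - u) ^ b)))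
      = ∫ v in Set.Ioo (0:ℝ) 1, (∑' k, g k v) := by
    rw [intervalIntegral.integral_of_le (by norm_num : (0:ℝ) ≤ 1),
      MeasureTheory.integral_Ioc_eq_integral_Ioo]
    apply setIntegral_congr_fun measurableSet_Ioo
    intro v hv
    obtain ⟨hv0, hv1⟩ := hv
    show Real.log v * (1 - v) ^ c *
        (∫ u in (0:ℝ)..v, Real.log (1 - u) * (u ^ a * (v - u) ^ b)) = ∑' k, g k v
    rw [innerEq a b hv0 hv1]
    simp only [hg, hD]
    rw [← tsum_mul_left]
  rw [hlhs, ← hkey]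
  apply tsum_congr
  intro k
  -- evaluate ∫ g k
  have h1 : (∫ v in Set.Ioo (0:ℝ) 1, g k v)
      = D k * ∫ v in (0:ℝ)..1, Real.log v * v ^ (((a:ℝ) + b + k + 3) - 1) * (1 - v) ^ c := by
    rw [← MeasureTheory.integral_Ioc_eq_integral_Ioo,
      ← intervalIntegral.integral_of_le (by norm_num : (0:ℝ) ≤ 1),
      ← intervalIntegral.integral_const_mul]
    apply intervalIntegral.integral_congr
    intro v _
    simp only [hg]
    rw [show ((a:ℝ) + b + k + 3) - 1 = ((a + b + k + 2 : ℕ) : ℝ) by push_cast; ring,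
      Real.rpow_natCast]
    ring
  rw [h1, logBeta c (by
    have : (0:ℝ) ≤ (a:ℝ) + b + k := by positivity
    linarith)]
  simp only [hD]
  ring

lemma GammaNat {p : ℕ} {x : ℝ} (hx : x = (p:ℝ) + 1) :
    Real.Gamma x = p.factorial := by rw [hx, Real.Gamma_nat_eq_factorial]

lemma digamma_diff_nonneg'' {x y : ℝ} (hx : 0 < x) (m : ℕ) (hy : y = x + m) :
    0 ≤ digamma y - digamma x := by rw [hy]; exact digamma_diff_nonneg' hx m

lemma digamma_diff_le'' {x y : ℝ} (hx : 0 < x) (m : ℕ) (hy : y = x + m) :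
    digamma y - digamma x ≤ m / x := by rw [hy]; exact digamma_diff_le' hx m

/-- For `1 ≤ i < j ≤ n`, with `(U_(i), U_(j))` the order statistics of
`n` i.i.d. uniforms on `[0,1]` (with joint density
`c_{i,j,n} u^{i−1}(v−u)^{j−i−1}(1−v)^{n−j}` on `{0 < u < v < 1}`,
`c_{i,j,n} = n!/((i−1)!(j−i−1)!(n−j)!)`):
`Cov[ln(1−U_(i)), ln U_(j)]
  = (Γ(n+1)/Γ(i)) Σ_{k=1}^∞ (Γ(i+k)/(k Γ(n+1+k))) (ψ(n+1+k) − ψ(j+k))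
    − (ψ(n+1−i) − ψ(n+1))(ψ(j) − ψ(n+1))`,
where the series converges, `Cov[X,Y] = E[XY] − E[X]E[Y]`,
`E[ln(1−U_(i))] = ψ(n+1−i) − ψ(n+1)` and `E[ln U_(j)] = ψ(j) − ψ(n+1)`.
The series over `k ≥ 1` is indexed below by `k : ℕ` via `k + 1`. -/
theorem covariance_logOneSub_log_orderStats
    (n i j : ℕ) (hn : 2 ≤ n) (hi1 : 1 ≤ i) (hij : i < j) (hjn : j ≤ n) :
    Summable (fun k : ℕ =>
      Real.Gamma ((i : ℝ) + ((k : ℝ) + 1)) /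
          (((k : ℝ) + 1) * Real.Gamma ((n : ℝ) + 1 + ((k : ℝ) + 1))) *
        (digamma ((n : ℝ) + 1 + ((k : ℝ) + 1)) - digamma ((j : ℝ) + ((k : ℝ) + 1)))) ∧
    ((n.factorial : ℝ) /
        ((i - 1).factorial * (j - i - 1).factorial * (n - j).factorial)) *
        (∫ v in (0:ℝ)..1, ∫ u in (0:ℝ)..v,
          Real.log (1 - u) * Real.log v *
            (u ^ (i - 1) * (v - u) ^ (j - i - 1) * (1 - v) ^ (n - j)))
      - (digamma ((n : ℝ) + 1 - i) - digamma ((n : ℝ) + 1)) *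
          (digamma j - digamma ((n : ℝ) + 1))
      = (Real.Gamma ((n : ℝ) + 1) / Real.Gamma i) *
          (∑' k : ℕ,
            Real.Gamma ((i : ℝ) + ((k : ℝ) + 1)) /
                (((k : ℝ) + 1) * Real.Gamma ((n : ℝ) + 1 + ((k : ℝ) + 1))) *
              (digamma ((n : ℝ) + 1 + ((k : ℝ) + 1)) - digamma ((j : ℝ) + ((k : ℝ) + 1))))
        - (digamma ((n : ℝ) + 1 - i) - digamma ((n : ℝ) + 1)) *
            (digamma j - digamma ((n : ℝ) + 1)) := by

  obtain ⟨a, rfl⟩ : ∃ a, i = a + 1 := ⟨i - 1, by omega⟩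
  obtain ⟨b, rfl⟩ : ∃ b, j = a + 1 + (b + 1) := ⟨j - (a + 1) - 1, by omega⟩
  obtain ⟨c, rfl⟩ : ∃ c, n = a + 1 + (b + 1) + c := ⟨n - (a + 1 + (b + 1)), by omega⟩
  have hsub1 : a + 1 - 1 = a := by omega
  have hsub2 : a + 1 + (b + 1) - (a + 1) - 1 = b := by omega
  have hsub3 : a + 1 + (b + 1) + c - (a + 1 + (b + 1)) = c := by omega
  -- Gamma values as factorials
  have hG1 : ∀ k : ℕ, Real.Gamma (((a + 1 : ℕ) : ℝ) + ((k:ℝ) + 1)) = ((a + k + 1).factorial : ℝ) :=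
    fun k => GammaNat (by push_cast; ring)
  have hG2 : ∀ k : ℕ, Real.Gamma (((a + 1 + (b + 1) + c : ℕ) : ℝ) + 1 + ((k:ℝ) + 1))
      = ((a + b + c + k + 3).factorial : ℝ) := fun k => GammaNat (by push_cast; ring)
  have hψpos : ∀ k : ℕ, (0:ℝ) < (a:ℝ) + b + k + 3 := by intro k; positivity
  have hψeq : ∀ k : ℕ, ((a + 1 + (b + 1) + c : ℕ) : ℝ) + 1 + ((k:ℝ) + 1)
      = ((a:ℝ) + b + k + 3) + ((c + 1 : ℕ) : ℝ) := by intro k; push_cast; ring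
  have hψeq2 : ∀ k : ℕ, ((a + 1 + (b + 1) : ℕ) : ℝ) + ((k:ℝ) + 1)
      = ((a:ℝ) + b + k + 3) := by intro k; push_cast; ring
  constructor
  · -- Summability
    apply Summable.of_nonneg_of_le (fun k => ?_) (fun k => ?_)
      (summable_one_div_sq.mul_left ((a:ℝ) + b + c + 4))
    · apply mul_nonneg
      · apply div_nonneg (Real.Gamma_nonneg_of_nonneg (by positivity))
        apply mul_nonneg (by positivity)
        exact (Real.Gamma_pos_of_pos (by positivity)).le
      · rw [hψeq2 k]
        exact digamma_diff_nonneg'' (hψpos k) (c + 1) (hψeq k)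
    · rw [hG1 k, hG2 k, hψeq2 k]
      have hd : digamma (((a + 1 + (b + 1) + c : ℕ) : ℝ) + 1 + ((k:ℝ) + 1))
          - digamma ((a:ℝ) + b + k + 3) ≤ ((c + 1 : ℕ) : ℝ) / ((a:ℝ) + b + k + 3) :=
        digamma_diff_le'' (hψpos k) (c + 1) (hψeq k)
      have hd2 : digamma (((a + 1 + (b + 1) + c : ℕ) : ℝ) + 1 + ((k:ℝ) + 1))
          - digamma ((a:ℝ) + b + k + 3) ≤ (c:ℝ) + 1 := by
        refine hd.trans ?_
        rw [div_le_iff₀ (hψpos k)]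
        push_cast
        nlinarith [Nat.cast_nonneg (α := ℝ) a, Nat.cast_nonneg (α := ℝ) b,
          Nat.cast_nonneg (α := ℝ) c, Nat.cast_nonneg (α := ℝ) k]
      have hfac : ((a + k + 1).factorial : ℝ) / (((k:ℝ) + 1) * (a + b + c + k + 3).factorial)
          ≤ 1 / ((k:ℝ) + 1) ^ 2 := by
        have hnat : (k + 1) * (a + k + 1).factorial ≤ (a + b + c + k + 3).factorial := by
          calc (k + 1) * (a + k + 1).factorial ≤ (a + k + 2) * (a + k + 1).factorial :=
                Nat.mul_le_mul_right _ (by omega)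
            _ = (a + k + 2).factorial := (Nat.factorial_succ (a + k + 1)).symm
            _ ≤ (a + b + c + k + 3).factorial := Nat.factorial_le (by omega)
        have hnat' : ((k:ℝ) + 1) * ((a + k + 1).factorial : ℝ)
            ≤ ((a + b + c + k + 3).factorial : ℝ) := by exact_mod_cast hnat
        rw [div_le_div_iff₀ (by positivity) (by positivity)]
        calc ((a + k + 1).factorial : ℝ) * ((k:ℝ) + 1) ^ 2
            = (((k:ℝ) + 1) * (a + k + 1).factorial) * (((k:ℝ) + 1)) := by ring
          _ ≤ ((a + b + c + k + 3).factorial : ℝ) * ((k:ℝ) + 1) := by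
              apply mul_le_mul_of_nonneg_right hnat' (by positivity)
          _ = 1 * (((k:ℝ) + 1) * (a + b + c + k + 3).factorial) := by ring
      have hψd0 : 0 ≤ digamma (((a + 1 + (b + 1) + c : ℕ) : ℝ) + 1 + ((k:ℝ) + 1))
          - digamma ((a:ℝ) + b + k + 3) :=
        digamma_diff_nonneg'' (hψpos k) (c + 1) (hψeq k)
      calc ((a + k + 1).factorial : ℝ) / (((k:ℝ) + 1) * (a + b + c + k + 3).factorial) *
            (digamma (((a + 1 + (b + 1) + c : ℕ) : ℝ) + 1 + ((k:ℝ) + 1))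
              - digamma ((a:ℝ) + b + k + 3))
          ≤ (1 / ((k:ℝ) + 1) ^ 2) * ((c:ℝ) + 1) := by
            apply mul_le_mul hfac hd2 hψd0 (by positivity)
        _ ≤ ((a:ℝ) + b + c + 4) * (1 / ((k:ℝ) + 1) ^ 2) := by
            rw [mul_comm]
            apply mul_le_mul_of_nonneg_right _ (by positivity)
            have : (0:ℝ) ≤ (a:ℝ) + (b:ℝ) := by positivity
            linarith
  · -- the identity
    rw [sub_left_inj]
    rw [hsub1, hsub2, hsub3]
    have hI : (∫ v in (0:ℝ)..1, ∫ u in (0:ℝ)..v,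
          Real.log (1 - u) * Real.log v * (u ^ a * (v - u) ^ b * (1 - v) ^ c))
        = ∫ v in (0:ℝ)..1, Real.log v * (1 - v) ^ c *
            (∫ u in (0:ℝ)..v, Real.log (1 - u) * (u ^ a * (v - u) ^ b)) := by
      apply intervalIntegral.integral_congr
      intro v _
      show (∫ u in (0:ℝ)..v, Real.log (1 - u) * Real.log v *
          (u ^ a * (v - u) ^ b * (1 - v) ^ c))
        = Real.log v * (1 - v) ^ c * ∫ u in (0:ℝ)..v, Real.log (1 - u) * (u ^ a * (v - u) ^ b)
      rw [← intervalIntegral.integral_const_mul]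
      apply intervalIntegral.integral_congr
      intro u _
      show Real.log (1 - u) * Real.log v * (u ^ a * (v - u) ^ b * (1 - v) ^ c)
        = Real.log v * (1 - v) ^ c * (Real.log (1 - u) * (u ^ a * (v - u) ^ b))
      ring
    rw [hI, outerEq a b c, ← tsum_mul_left, ← tsum_mul_left]
    apply tsum_congr
    intro k
    rw [hG1 k, hG2 k]
    rw [GammaNat (p := a + b + c + 2)
      (show ((a + 1 + (b + 1) + c : ℕ) : ℝ) + 1 = ((a + b + c + 2 : ℕ):ℝ) + 1 by push_cast; ring)]
    rw [GammaNat (p := a) (show (((a + 1 : ℕ)) : ℝ) = (a:ℝ) + 1 by push_cast; ring)]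
    rw [GammaNat (p := a + b + k + 2)
      (show ((a:ℝ) + b + k + 3) = ((a + b + k + 2 : ℕ):ℝ) + 1 by push_cast; ring)]
    rw [GammaNat (p := a + b + c + k + 3)
      (show ((a:ℝ) + b + k + 3 + c + 1) = ((a + b + c + k + 3 : ℕ):ℝ) + 1 by push_cast; ring)]
    rw [show digamma ((a:ℝ) + b + k + 3 + c + 1)
        = digamma (((a + 1 + (b + 1) + c : ℕ) : ℝ) + 1 + ((k:ℝ) + 1)) by rw [hψeq k]; push_cast; ring_nf,
      show digamma ((a:ℝ) + b + k + 3)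
        = digamma (((a + 1 + (b + 1) : ℕ) : ℝ) + ((k:ℝ) + 1)) by rw [hψeq2 k]]
    have h1 : ((a + b + k + 2).factorial : ℝ) ≠ 0 := by positivity
    have h2 : ((a + b + c + k + 3).factorial : ℝ) ≠ 0 := by positivity
    have h3 : ((a:ℕ).factorial : ℝ) ≠ 0 := by positivity
    have h4 : ((b:ℕ).factorial : ℝ) ≠ 0 := by positivity
    have h5 : ((c:ℕ).factorial : ℝ) ≠ 0 := by positivity
    have h6 : ((k:ℝ) + 1) ≠ 0 := by positivity
    field_simp
    ring
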